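/- Let Γ be a linearly ordered abelian group and v a Γ-valued valuation on a field L. Let G be a finite group acting on L by v-preserving automorphisms, and fix t ∈ L with v(t) = γ. For α ∈ Γ with α > 0, the set G_α = {g ∈ G : v(t^{-1}g(t) − 1) ≥ α} is a subgroup of G, and α ≤ β implies G_β ⊆ G_α. -/

import Mathlib

/-- Let `Γ` be a linearly ordered abelian group and `v` a `Γ`-valued (additive) valuation
on a field `L`.  Let `G` be a finite group acting on `L` by `v`-preserving field
automorphisms, and fix `t ∈ L` with `v(t) = γ` finite.  For `α ∈ Γ` with `α > 0`, the set
`G_α = {g ∈ G : v(t⁻¹·g(t) - 1) ≥ α}` is a subgroup of `G`, and `α ≤ β` implies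
`G_β ⊆ G_α`. -/
theorem two_dimensional_ramification_filtration_subgroup
    {Γ : Type*} [AddCommGroup Γ] [LinearOrder Γ] [IsOrderedAddMonoid Γ]
    {L : Type*} [Field L]
    (v : AddValuation L (WithTop Γ))
    {G : Type*} [Group G] [Finite G] [MulSemiringAction G L]
    (hpres : ∀ (g : G) (x : L), v (g • x) = v x)
    (t : L) (γ : Γ) (ht : v t = (γ : WithTop Γ)) :
    (∀ α : Γ, 0 < α → ∃ S : Subgroup G, ∀ g : G,
      g ∈ S ↔ (α : WithTop Γ) ≤ v (t⁻¹ * (g • t) - 1)) ∧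
    (∀ α β : Γ, 0 < α → α ≤ β → ∀ g : G,
      (β : WithTop Γ) ≤ v (t⁻¹ * (g • t) - 1) →
      (α : WithTop Γ) ≤ v (t⁻¹ * (g • t) - 1)) := by
  have ht0 : t ≠ 0 := by
    intro h
    rw [h, v.map_zero] at ht
    exact (WithTop.coe_ne_top ht.symm).elim
  -- v (t⁻¹ * g • t) = 0 for all g
  have key : ∀ g : G, v (t⁻¹ * (g • t)) = 0 := by
    intro g
    rw [v.map_mul, hpres, ← v.map_mul, inv_mul_cancel₀ ht0, v.map_one]
  constructor
  · intro α hα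
    refine ⟨{ carrier := {g : G | (α : WithTop Γ) ≤ v (t⁻¹ * (g • t) - 1)}
              mul_mem' := ?_
              one_mem' := ?_
              inv_mem' := ?_ }, fun g => Iff.rfl⟩
    · intro g h hg hh
      show (α : WithTop Γ) ≤ v (t⁻¹ * ((g * h) • t) - 1)
      have expand : t⁻¹ * ((g * h) • t) - 1
          = (t⁻¹ * (g • t)) * (g • (t⁻¹ * (h • t) - 1)) + (t⁻¹ * (g • t) - 1) := by
        have hg0 : (g • t) ≠ 0 := by
          intro h0
          have := hpres g t
          rw [h0, v.map_zero, ht] at this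
          exact WithTop.coe_ne_top this.symm
        rw [smul_sub, smul_mul', smul_one, smul_inv'']
        field_simp
        rw [mul_smul]
        ring
      rw [expand]
      refine v.map_le_add ?_ ?_
      · rw [v.map_mul, key, hpres, zero_add]
        exact hh
      · exact hg
    · show (α : WithTop Γ) ≤ v (t⁻¹ * ((1 : G) • t) - 1)
      rw [one_smul, inv_mul_cancel₀ ht0, sub_self, v.map_zero]
      exact le_top
    · intro g hg
      show (α : WithTop Γ) ≤ v (t⁻¹ * (g⁻¹ • t) - 1)
      have hpres' : v (g • (t⁻¹ * (g⁻¹ • t) - 1)) = v (t⁻¹ * (g⁻¹ • t) - 1) := hpres _ _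
      rw [← hpres']
      have expand : g • (t⁻¹ * (g⁻¹ • t) - 1)
          = -((g • t)⁻¹ * t * (t⁻¹ * (g • t) - 1)) := by
        rw [smul_sub, smul_mul', smul_one, smul_inv'', smul_inv_smul]
        have hg0 : (g • t) ≠ 0 := by
          intro h0
          have := hpres g t
          rw [h0, v.map_zero, ht] at this
          exact WithTop.coe_ne_top this.symm
        field_simp
        ring
      have key2 : v ((g • t)⁻¹ * t) = 0 := by
        rw [v.map_mul, ← smul_inv'', hpres, ← v.map_mul, inv_mul_cancel₀ ht0, v.map_one]
      rw [expand, v.map_neg, v.map_mul, key2, zero_add]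
      exact hg
  · intro α β hα hαβ g hg
    exact le_trans (WithTop.coe_le_coe.mpr hαβ) hg
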